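/- arXiv:1505.08070 — 4 statements merged into one kernel-verified Lean document; each statement's English description precedes it below -/
import Mathlib

section
/- Suppose t, t̃ ∈ ℝ³ are nonzero and A, Ã are invertible 3×3 real matrices with [t]× A = [t̃]× Ã. Then there exist λ ≠ 0 and v ∈ ℝ³ such that t̃ = λ t and λ Ã = A + t vᵀ. -/
open Matrix
/-- The 3×3 skew-symmetric matrix `[t]×` of the cross product with `t`. -/
def skew (t : Fin 3 → ℝ) : Matrix (Fin 3) (Fin 3) ℝ :=
  !![0, -t 2, t 1; t 2, 0, -t 0; -t 1, t 0, 0]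

lemma skew_self_vecMul (u : Fin 3 → ℝ) : u ᵥ* skew u = 0 := by
  funext j
  fin_cases j <;>
    simp [skew, Matrix.vecMul, dotProduct, Fin.sum_univ_three] <;> ring

lemma prop_of_cross (t x : Fin 3 → ℝ)
    (h0 : t 1 * x 2 = t 2 * x 1) (h1 : t 0 * x 2 = t 2 * x 0)
    (h2 : t 0 * x 1 = t 1 * x 0) (i k : Fin 3) : x k * t i = x i * t k := by
  fin_cases i <;> fin_cases k <;>
    simp only [Fin.zero_eta, Fin.mk_one, show (⟨2, by norm_num⟩ : Fin 3) = 2 from rfl] <;>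
    linarith

/-- Ambiguity in decomposing a rank-2 essential matrix: if
`[t]× A = [t̃]× Ã` then `t̃ = λ t` and `λ Ã = A + t vᵀ` for some `λ ≠ 0`, `v`. -/
theorem essential_decomposition_ambiguity (t tt : Fin 3 → ℝ)
    (A At : Matrix (Fin 3) (Fin 3) ℝ)
    (ht : t ≠ 0) (htt : tt ≠ 0) (hA : IsUnit A.det) (hAt : IsUnit At.det)
    (h : skew t * A = skew tt * At) :
    ∃ l : ℝ, l ≠ 0 ∧ ∃ v : Fin 3 → ℝ, tt = l • t ∧ l • At = A + vecMulVec t v := by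
  -- Step A : tt ᵥ* skew t = 0
  have hstep : (tt ᵥ* skew t) ᵥ* A = 0 := by
    rw [Matrix.vecMul_vecMul, h, ← Matrix.vecMul_vecMul, skew_self_vecMul,
      Matrix.zero_vecMul]
  have hvz : tt ᵥ* skew t = 0 := by
    have h2' : (tt ᵥ* skew t) ᵥ* (A * A⁻¹) = (0 : Fin 3 → ℝ) ᵥ* A⁻¹ := by
      rw [← Matrix.vecMul_vecMul, hstep]
    rwa [Matrix.mul_nonsing_inv A hA, Matrix.vecMul_one, Matrix.zero_vecMul] at h2'
  -- extract cross equations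
  have e0 := congrFun hvz 0
  have e1 := congrFun hvz 1
  have e2 := congrFun hvz 2
  simp [skew, Matrix.vecMul, dotProduct, Fin.sum_univ_three] at e0 e1 e2
  have hprop : ∀ i k : Fin 3, tt k * t i = tt i * t k := by
    apply prop_of_cross t tt <;> linarith
  -- pick i with t i ≠ 0
  obtain ⟨i, hi⟩ : ∃ i, t i ≠ 0 := by
    by_contra hc
    push_neg at hc
    exact ht (funext hc)
  set l : ℝ := tt i / t i with hl
  have httl : tt = l • t := by
    funext k
    have := hprop i k
    rw [Pi.smul_apply, smul_eq_mul, hl, div_mul_eq_mul_div, eq_div_iff hi]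
    linarith [hprop i k]
  have hlne : l ≠ 0 := by
    intro h0
    apply htt
    rw [httl, h0, zero_smul]
  refine ⟨l, hlne, ?_⟩
  -- Step C
  have hskew : skew tt = l • skew t := by
    rw [httl]
    ext a b
    fin_cases a <;> fin_cases b <;> simp [skew] <;> ring
  set M : Matrix (Fin 3) (Fin 3) ℝ := l • At - A with hM
  have hMzero : skew t * M = 0 := by
    have : skew t * (l • At) = skew t * A := by
      rw [Matrix.mul_smul, ← Matrix.smul_mul, ← hskew, h]
    rw [hM, Matrix.mul_sub, this, sub_self]
  have hMprop : ∀ j k : Fin 3, M k j * t i = M i j * t k := by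
    intro j
    have f0 := congrFun (congrFun hMzero 0) j
    have f1 := congrFun (congrFun hMzero 1) j
    have f2 := congrFun (congrFun hMzero 2) j
    simp [skew, Matrix.mul_apply, Fin.sum_univ_three] at f0 f1 f2
    intro k
    exact prop_of_cross t (fun k => M k j) (by linarith) (by linarith) (by linarith) i k
  refine ⟨fun j => M i j / t i, httl, ?_⟩
  ext k j
  have hMk : M k j = l * At k j - A k j := by simp [hM, Matrix.sub_apply]
  have key : M k j = t k * (M i j / t i) := by
    rw [eq_div_iff hi] at *
    field_simp
    linear_combination hMprop j k
  simp only [Matrix.add_apply, Matrix.smul_apply, vecMulVec_apply, smul_eq_mul]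
  have hfin : l * At k j - A k j = t k * (M i j / t i) := by rw [← hMk]; exact key
  linarith [hfin]
end

section
/- Suppose q, q' ∈ ℝ³ with last coordinates 1 lie in correspondence under the affine deformation (A, t): there exists λ ≠ 0 with q' ≡ λ A q + t up to nonzero scale. If E₂ is any 3×3 matrix with q'ᵀ E₂ q = 0, then the original space point P = (λ q, 1) ∈ ℝ⁴ satisfies the quadric equation Pᵀ Q P = 0, where Q = [A; t]ᵀ E₂ [I; 0] (a 4×4 matrix, [A;t] being the 3×4 matrix with columns of A followed by t, and [I;0] the 3×4 matrix of identity and a zero column). -/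
open Matrix

private lemma At_mulVec (A : Matrix (Fin 3) (Fin 3) ℝ) (t q : Fin 3 → ℝ) (lam : ℝ) :
    (Matrix.of fun (i : Fin 3) (j : Fin 4) =>
        if h : (j : ℕ) < 3 then A i ⟨j, h⟩ else t i).mulVec
      (fun (i : Fin 4) => if h : (i : ℕ) < 3 then lam * q ⟨i, h⟩ else 1)
    = lam • A.mulVec q + t := by
  funext i
  simp [Matrix.mulVec, dotProduct, Fin.sum_univ_four, Fin.sum_univ_three,
    show ((0:Fin 4):ℕ) = 0 from rfl, show ((1:Fin 4):ℕ) = 1 from rfl,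
    show ((2:Fin 4):ℕ) = 2 from rfl, show ((3:Fin 4):ℕ) = 3 from rfl,
    show ((0:Fin 3):ℕ) = 0 from rfl, show ((1:Fin 3):ℕ) = 1 from rfl,
    show ((2:Fin 3):ℕ) = 2 from rfl]
  ring

private lemma proj_mulVec (q : Fin 3 → ℝ) (lam : ℝ) (hq : q 2 = 1) :
    (Matrix.of fun (i : Fin 3) (j : Fin 4) =>
        if (i : ℕ) = (j : ℕ) then (1 : ℝ) else 0).mulVec
      (fun (i : Fin 4) => if h : (i : ℕ) < 3 then lam * q ⟨i, h⟩ else 1)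
    = lam • q := by
  funext i
  fin_cases i <;>
    simp [Matrix.mulVec, dotProduct, Fin.sum_univ_four,
      show ((0:Fin 4):ℕ) = 0 from rfl, show ((1:Fin 4):ℕ) = 1 from rfl,
      show ((2:Fin 4):ℕ) = 2 from rfl, show ((3:Fin 4):ℕ) = 3 from rfl, hq]

/-- Critical surface condition: if an alternative matrix `E₂` annihilates a
corresponding pair `(q,q')`, then the space point `P = (λq, 1)` lies on the
quadric `Q = [A;t]ᵀ E₂ [I;0]`. -/
theorem critical_surface_quadric (A E2 : Matrix (Fin 3) (Fin 3) ℝ)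
    (t q q' : Fin 3 → ℝ) (hq : q 2 = 1) (hq' : q' 2 = 1)
    (lam : ℝ) (hlam : lam ≠ 0)
    (hcorr : ∃ mu : ℝ, mu ≠ 0 ∧ mu • q' = lam • A.mulVec q + t)
    (hE2 : q' ⬝ᵥ E2.mulVec q = 0) :
    let At : Matrix (Fin 3) (Fin 4) ℝ :=
      Matrix.of fun i j => if h : (j : ℕ) < 3 then A i ⟨j, h⟩ else t i
    let proj : Matrix (Fin 3) (Fin 4) ℝ :=
      Matrix.of fun i j => if (i : ℕ) = (j : ℕ) then (1 : ℝ) else 0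
    let P : Fin 4 → ℝ := fun i => if h : (i : ℕ) < 3 then lam * q ⟨i, h⟩ else 1
    let Q : Matrix (Fin 4) (Fin 4) ℝ := Atᵀ * E2 * proj
    P ⬝ᵥ Q.mulVec P = 0 := by
  intro At proj P Q
  obtain ⟨mu, hmu, hc⟩ := hcorr
  have hAt : At.mulVec P = mu • q' := by
    rw [show At.mulVec P = lam • A.mulVec q + t from At_mulVec A t q lam, ← hc]
  have hproj : proj.mulVec P = lam • q := proj_mulVec q lam hq
  have key : P ⬝ᵥ Q.mulVec P = (At.mulVec P) ⬝ᵥ E2.mulVec (proj.mulVec P) := by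
    simp [Q, ← Matrix.mulVec_mulVec, Matrix.dotProduct_mulVec, Matrix.vecMul_transpose]
  rw [key, hAt, hproj]
  simp [Matrix.mulVec_smul, hE2]
end

section
/- Let Φ: ℝ³ → ℝ³ be given by Φ₁(X,Y,Z) = aₓX + bₓY + cₓZ + dₓ, Φ₂(X,Y,Z) = a_y Y² + b_y X² + c_y Z², Φ₃(X,Y,Z) = a_z Z³. Suppose q = (qₓ, q_y, 1), q' = (qₓ', q_y', 1), and there exists α ≠ 0 with qₓ' Φ₃(α q) = Φ₁(α q) and q_y' Φ₃(α q) = Φ₂(α q). Then the following polynomial identity in the image coordinates holds: (b_y qₓ² + a_y q_y² + c_y)³ qₓ' − a_z q_y'² (aₓ qₓ + bₓ q_y + cₓ)(b_y qₓ² + a_y q_y² + c_y) − a_z² dₓ q_y'³ = 0. -/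
open Matrix

/-- Matching constraint for the polynomial deformation
`Φ = (aₓX+bₓY+cₓZ+dₓ, a_yY²+b_yX²+c_yZ², a_zZ³)`: eliminating the depth `α`
from the projection equations yields a polynomial identity in the image
coordinates. -/
theorem polynomial_matching_constraint
    (ax bx cx dx ay by_ cy az : ℝ) (qx qy qx' qy' : ℝ)
    (Φ1 : ℝ → ℝ → ℝ → ℝ) (hΦ1 : ∀ X Y Z, Φ1 X Y Z = ax * X + bx * Y + cx * Z + dx)
    (Φ2 : ℝ → ℝ → ℝ → ℝ) (hΦ2 : ∀ X Y Z, Φ2 X Y Z = ay * Y ^ 2 + by_ * X ^ 2 + cy * Z ^ 2)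
    (Φ3 : ℝ → ℝ → ℝ → ℝ) (hΦ3 : ∀ X Y Z, Φ3 X Y Z = az * Z ^ 3)
    (h : ∃ α : ℝ, α ≠ 0 ∧
      qx' * Φ3 (α * qx) (α * qy) α = Φ1 (α * qx) (α * qy) α ∧
      qy' * Φ3 (α * qx) (α * qy) α = Φ2 (α * qx) (α * qy) α) :
    (by_ * qx ^ 2 + ay * qy ^ 2 + cy) ^ 3 * qx'
      - az * qy' ^ 2 * (ax * qx + bx * qy + cx)
          * (by_ * qx ^ 2 + ay * qy ^ 2 + cy)
      - az ^ 2 * dx * qy' ^ 3 = 0 := by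
  obtain ⟨α, hα, h1, h2⟩ := h
  rw [hΦ1, hΦ3] at h1
  rw [hΦ2, hΦ3] at h2
  have key : α ^ 2 * (az * qy' * α) = α ^ 2 * (by_ * qx ^ 2 + ay * qy ^ 2 + cy) := by
    linear_combination h2
  have key' : az * qy' * α = by_ * qx ^ 2 + ay * qy ^ 2 + cy :=
    mul_left_cancel₀ (pow_ne_zero 2 hα) key
  set Q := by_ * qx ^ 2 + ay * qy ^ 2 + cy with hQ
  set L := ax * qx + bx * qy + cx with hL
  have H : az * (Q ^ 3 * qx' - az * qy' ^ 2 * L * Q - az ^ 2 * dx * qy' ^ 3) = 0 := by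
    linear_combination (az ^ 3 * qy' ^ 3) * h1
      - (az * qx' * (Q ^ 2 + Q * (az * qy' * α) + az ^ 2 * qy' ^ 2 * α ^ 2)
          - az ^ 2 * qy' ^ 2 * L) * key'
  rcases eq_or_ne az 0 with haz | haz
  · rw [haz] at key'
    rw [haz]
    linear_combination (-(qx' * Q ^ 2)) * key'
  · exact (mul_eq_zero.mp H).resolve_left haz
end

section
/- Let t ∈ ℝ³, t ≠ 0, and A invertible 3×3. The set of pairs (t̃, Ã) with t̃ ≠ 0, Ã invertible, and [t̃]× Ã = [t]× A is exactly { (λ t, (1/λ)(A + t vᵀ)) : λ ∈ ℝ \ {0}, v ∈ ℝ³, A + t vᵀ invertible }; in particular this set is infinite. -/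
open Matrix

lemma parallel_of_skew_mulVec_eq_zero {t x : Fin 3 → ℝ} (ht : t ≠ 0)
    (h : skew t *ᵥ x = 0) : ∃ l : ℝ, x = l • t := by
  have h0 := congrFun h 0
  have h1 := congrFun h 1
  have h2 := congrFun h 2
  simp [skew, mulVec, dotProduct, Fin.sum_univ_three] at h0 h1 h2
  have htc : t 0 ≠ 0 ∨ t 1 ≠ 0 ∨ t 2 ≠ 0 := by
    by_contra hc
    push_neg at hc
    obtain ⟨c0, c1, c2⟩ := hc
    exact ht (funext fun i => by fin_cases i <;> assumption)
  rcases htc with hi | hi | hi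
  · refine ⟨x 0 / t 0, ?_⟩
    have e0 : x 0 = x 0 / t 0 * t 0 := by field_simp
    have e1 : x 1 = x 0 / t 0 * t 1 := by field_simp; nlinarith [h2]
    have e2 : x 2 = x 0 / t 0 * t 2 := by field_simp; nlinarith [h1]
    funext j; fin_cases j
    exacts [e0, e1, e2]
  · refine ⟨x 1 / t 1, ?_⟩
    have e0 : x 0 = x 1 / t 1 * t 0 := by field_simp; nlinarith [h2]
    have e1 : x 1 = x 1 / t 1 * t 1 := by field_simp
    have e2 : x 2 = x 1 / t 1 * t 2 := by field_simp; nlinarith [h0]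
    funext j; fin_cases j
    exacts [e0, e1, e2]
  · refine ⟨x 2 / t 2, ?_⟩
    have e0 : x 0 = x 2 / t 2 * t 0 := by field_simp; nlinarith [h1]
    have e1 : x 1 = x 2 / t 2 * t 1 := by field_simp; nlinarith [h0]
    have e2 : x 2 = x 2 / t 2 * t 2 := by field_simp
    funext j; fin_cases j
    exacts [e0, e1, e2]

lemma skew_smul (l : ℝ) (t : Fin 3 → ℝ) : skew (l • t) = l • skew t := by
  ext i j
  fin_cases i <;> fin_cases j <;> simp [skew] <;> ring

lemma vecMul_skew_self (t : Fin 3 → ℝ) : t ᵥ* skew t = 0 := by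
  funext j; fin_cases j <;> simp [vecMul, skew, dotProduct, Fin.sum_univ_three] <;> ring

lemma skew_mul_vecMulVec (t v : Fin 3 → ℝ) : skew t * vecMulVec t v = 0 := by
  ext i j
  fin_cases i <;>
    simp [Matrix.mul_apply, vecMulVec_apply, skew, Fin.sum_univ_three] <;> ring

lemma vecMul_skew_eq (t x : Fin 3 → ℝ) : x ᵥ* skew t = -(skew t *ᵥ x) := by
  funext j
  fin_cases j <;> simp [vecMul, mulVec, skew, dotProduct, Fin.sum_univ_three] <;> ring

/-- Full characterization of the decomposition ambiguity of the essential
matrix `[t]× A`, and infinitude of this set. -/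
theorem essential_ambiguity_set (t : Fin 3 → ℝ) (ht : t ≠ 0)
    (A : Matrix (Fin 3) (Fin 3) ℝ) (hA : IsUnit A.det) :
    ({p : (Fin 3 → ℝ) × Matrix (Fin 3) (Fin 3) ℝ |
        p.1 ≠ 0 ∧ IsUnit p.2.det ∧ skew p.1 * p.2 = skew t * A}
      = {p | ∃ l : ℝ, l ≠ 0 ∧ ∃ v : Fin 3 → ℝ,
          IsUnit (A + vecMulVec t v).det ∧
          p.1 = l • t ∧ p.2 = (1 / l) • (A + vecMulVec t v)}) ∧
    {p : (Fin 3 → ℝ) × Matrix (Fin 3) (Fin 3) ℝ |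
        p.1 ≠ 0 ∧ IsUnit p.2.det ∧ skew p.1 * p.2 = skew t * A}.Infinite := by
  -- membership of the parametrized family in the original set
  have hmem : ∀ (l : ℝ), l ≠ 0 → ∀ v : Fin 3 → ℝ, IsUnit (A + vecMulVec t v).det →
      (l • t ≠ 0 ∧ IsUnit ((1 / l) • (A + vecMulVec t v)).det ∧
        skew (l • t) * ((1 / l) • (A + vecMulVec t v)) = skew t * A) := by
    intro l hl v hv
    refine ⟨smul_ne_zero hl ht, ?_, ?_⟩
    · rw [Matrix.det_smul]
      exact ((isUnit_iff_ne_zero.mpr (one_div_ne_zero hl)).pow _).mul hv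
    · rw [skew_smul, Matrix.smul_mul, Matrix.mul_smul, smul_smul,
        mul_one_div_cancel hl, one_smul, Matrix.mul_add, skew_mul_vecMulVec, add_zero]
  have hset : ({p : (Fin 3 → ℝ) × Matrix (Fin 3) (Fin 3) ℝ |
        p.1 ≠ 0 ∧ IsUnit p.2.det ∧ skew p.1 * p.2 = skew t * A}
      = {p | ∃ l : ℝ, l ≠ 0 ∧ ∃ v : Fin 3 → ℝ,
          IsUnit (A + vecMulVec t v).det ∧
          p.1 = l • t ∧ p.2 = (1 / l) • (A + vecMulVec t v)}) := by
    ext ⟨t', A'⟩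
    simp only [Set.mem_setOf_eq]
    constructor
    · rintro ⟨ht', hdet', heq⟩
      -- t' is parallel to t
      have hstep1 : (t' ᵥ* skew t) ᵥ* A = 0 := by
        rw [Matrix.vecMul_vecMul, ← heq, ← Matrix.vecMul_vecMul, vecMul_skew_self,
          Matrix.zero_vecMul]
      have hstep2 : t' ᵥ* skew t = 0 := by
        have := congrArg (fun y => y ᵥ* A⁻¹) hstep1
        simpa [Matrix.vecMul_vecMul, Matrix.mul_assoc,
          Matrix.mul_nonsing_inv A hA] using this
      have hstep3 : skew t *ᵥ t' = 0 := by
        have h := vecMul_skew_eq t t'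
        rw [hstep2] at h
        exact neg_eq_zero.mp h.symm
      obtain ⟨l, hlt⟩ := parallel_of_skew_mulVec_eq_zero ht hstep3
      have hl : l ≠ 0 := by
        rintro rfl
        rw [zero_smul] at hlt
        exact ht' hlt
      have hz : skew t * (l • A' - A) = 0 := by
        have hmul : skew t * (l • A') = skew t * A := by
          rw [Matrix.mul_smul, ← Matrix.smul_mul, ← skew_smul, ← hlt, heq]
        rw [Matrix.mul_sub, hmul, sub_self]
      have hcol : ∀ j : Fin 3, ∃ c : ℝ, (fun i => (l • A' - A) i j) = c • t := by
        intro j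
        apply parallel_of_skew_mulVec_eq_zero ht
        funext k
        have h := congrFun (congrFun hz k) j
        simpa [mulVec, dotProduct, Matrix.mul_apply] using h
      choose v hv using hcol
      have hAeq : A + vecMulVec t v = l • A' := by
        ext i j
        have h := congrFun (hv j) i
        simp only [Matrix.sub_apply, Matrix.smul_apply, smul_eq_mul,
          Pi.smul_apply] at h
        simp only [Matrix.add_apply, vecMulVec_apply, Matrix.smul_apply, smul_eq_mul]
        linear_combination -h
      refine ⟨l, hl, v, ?_, hlt, ?_⟩
      · rw [hAeq, Matrix.det_smul]
        exact ((isUnit_iff_ne_zero.mpr hl).pow _).mul hdet'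
      · rw [hAeq, smul_smul, one_div, inv_mul_cancel₀ hl, one_smul]
    · rintro ⟨l, hl, v, hv, h1, h2⟩
      obtain ⟨m1, m2, m3⟩ := hmem l hl v hv
      exact ⟨h1 ▸ m1, h2 ▸ m2, by rw [h1, h2, m3]⟩
  refine ⟨hset, ?_⟩
  refine Set.infinite_of_injective_forall_mem
    (f := fun n : ℕ => ((((n : ℝ) + 1) • t, (1 / ((n : ℝ) + 1)) • A) :
      (Fin 3 → ℝ) × Matrix (Fin 3) (Fin 3) ℝ)) ?_ ?_
  · intro a b hab
    obtain ⟨i, hi⟩ : ∃ i, t i ≠ 0 := by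
      by_contra hc; push_neg at hc; exact ht (funext fun i => hc i)
    have h := congrFun (congrArg Prod.fst hab) i
    simp only [Pi.smul_apply, smul_eq_mul] at h
    have h3 := mul_right_cancel₀ hi h
    have h4 : (a : ℝ) = (b : ℝ) := by linarith
    exact_mod_cast h4
  · intro n
    have hn : ((n : ℝ) + 1) ≠ 0 := by positivity
    have hz0 : A + vecMulVec t 0 = A := by
      ext i j; simp [vecMulVec_apply]
    obtain ⟨m1, m2, m3⟩ := hmem ((n : ℝ) + 1) hn 0 (by rw [hz0]; exact hA)
    rw [hz0] at m2 m3
    exact ⟨m1, m2, m3⟩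
end
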